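/- Let V : (0,∞) → ℝ be measurable and bounded, and suppose there are constants a > 0, θ > 0, m ∈ (0,1), C_V > 0 and R₀ > 0 such that |V(ρ) − 1 − a ρ^{−m}| ≤ C_V ρ^{−(m+θ)} for all ρ ≥ R₀. Let U : ℝ³ → ℝ be measurable with 0 ≤ U(x) ≤ C₀ e^{−δ|x|} for some constants C₀, δ > 0. Then there exists C > 0 such that for every ξ ∈ ℝ³ with |ξ| ≥ max(1, 2R₀), ∫_{ℝ³} (V(|x|) − 1)² U(x − ξ)² dx ≤ C / |ξ|^{2m}; consequently, for every w ∈ L²(ℝ³), | ∫_{ℝ³} (V(|x|) − 1) U(x − ξ) w(x) dx | ≤ C^{1/2} |ξ|^{−m} (∫_{ℝ³} w²)^{1/2}. -/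

import Mathlib

noncomputable section

open MeasureTheory Real Filter

/-- ℝ³ as a Euclidean space. -/
abbrev R3 : Type := EuclideanSpace ℝ (Fin 3)

/-- The point (a, b, c) ∈ ℝ³. -/
def pt (a b c : ℝ) : R3 := (WithLp.equiv 2 (Fin 3 → ℝ)).symm ![a, b, c]

/-- The Laplacian of `f : ℝ³ → ℝ`, as the sum of the second partial derivatives. -/
def lap (f : R3 → ℝ) (x : R3) : ℝ :=
  ∑ i : Fin 3, fderiv ℝ (fun y => fderiv ℝ f y (EuclideanSpace.single i 1)) x
    (EuclideanSpace.single i 1)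

/-- The Schrödinger–Newton ground state: a pair (U, Ψ) of positive, radially
symmetric C² functions solving ΔU − U + ΨU = 0, ΔΨ + (1/2)U² = 0 on ℝ³,
tending to 0 at infinity, with U(0) = max U, U strictly decreasing in |x| and
|x|e^{|x|}U(x) → λ₀ > 0 as |x| → ∞. -/
structure GroundState (U Ψ : R3 → ℝ) : Prop where
  smoothU : ContDiff ℝ 2 U
  smoothΨ : ContDiff ℝ 2 Ψ
  posU : ∀ x, 0 < U x
  posΨ : ∀ x, 0 < Ψ x
  radU : ∀ x y : R3, ‖x‖ = ‖y‖ → U x = U y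
  radΨ : ∀ x y : R3, ‖x‖ = ‖y‖ → Ψ x = Ψ y
  maxU : ∀ x, U x ≤ U 0
  eqU : ∀ x, lap U x - U x + Ψ x * U x = 0
  eqΨ : ∀ x, lap Ψ x + (1/2) * (U x)^2 = 0
  limU : ∀ ε > 0, ∃ R : ℝ, ∀ x : R3, R ≤ ‖x‖ → |U x| ≤ ε
  limΨ : ∀ ε > 0, ∃ R : ℝ, ∀ x : R3, R ≤ ‖x‖ → |Ψ x| ≤ ε
  decU : ∀ x y : R3, ‖x‖ < ‖y‖ → U y < U x
  decayU : ∃ lam₀ > (0:ℝ), ∀ ε > 0, ∃ R : ℝ, ∀ x : R3, R ≤ ‖x‖ →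
    |‖x‖ * Real.exp ‖x‖ * U x - lam₀| ≤ ε

/-- Condition (H) on the radial potential V, with constants V₀, a, θ, m. -/
def CondH (V : ℝ → ℝ) (V₀ a θ m : ℝ) : Prop :=
  ContinuousOn V (Set.Ioi 0) ∧
  (∃ Cb : ℝ, ∀ ρ ∈ Set.Ioi (0:ℝ), |V ρ| ≤ Cb) ∧
  0 < V₀ ∧ 0 < a ∧ 0 < θ ∧ 1/2 ≤ m ∧ m < 1 ∧
  (∀ ρ ∈ Set.Ioi (0:ℝ), V₀ ≤ V ρ) ∧
  ∃ C_V > (0:ℝ), ∃ R₀ > (0:ℝ), ∀ ρ : ℝ, R₀ ≤ ρ →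
    |V ρ - V₀ - a * ρ ^ (-m)| ≤ C_V * ρ ^ (-(m + θ))

/-- The spike locations ξ_i = (r cos(2iπ/s), r sin(2iπ/s), 0), i = 0, …, s−1
(indexed from 0, so that here `xiP s r 0` is ξ₁ of the paper and the spike
`xiP s r (i-1)` is ξ_i of the paper). -/
def xiP (s : ℕ) (r : ℝ) (i : ℕ) : R3 :=
  pt (r * Real.cos (2 * π * i / s)) (r * Real.sin (2 * π * i / s)) 0

/-- Rotation by angle θ about the x₃-axis. -/
def rotZ (θ : ℝ) (x : R3) : R3 :=
  pt (Real.cos θ * x 0 - Real.sin θ * x 1) (Real.sin θ * x 0 + Real.cos θ * x 1) (x 2)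

/-- The sum of bumps U_r = Σ_{i} U(· − ξ_i). -/
def Ur (U : R3 → ℝ) (s : ℕ) (r : ℝ) (x : R3) : ℝ :=
  ∑ i ∈ Finset.range s, U (x - xiP s r i)

/-- Z_i(x) = −∇U(x−ξ_i)·(cos θ_i, sin θ_i, 0) = ∂/∂r of U(· − ξ_i). -/
def Zfun (U : R3 → ℝ) (s : ℕ) (r : ℝ) (i : ℕ) (x : R3) : ℝ :=
  -(inner ℝ (gradient U (x - xiP s r i))
      (pt (Real.cos (2 * π * i / s)) (Real.sin (2 * π * i / s)) 0) : ℝ)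

/-- Membership in the symmetry class 𝓔_s with the orthogonality conditions. -/
def memEs (U : R3 → ℝ) (s : ℕ) (r : ℝ) (w : R3 → ℝ) : Prop :=
  (∀ x : R3, w (pt (x 0) (-(x 1)) (x 2)) = w x) ∧
  (∀ x : R3, w (pt (x 0) (x 1) (-(x 2))) = w x) ∧
  (∀ x : R3, w (rotZ (2 * π / s) x) = w x) ∧
  (∀ i ∈ Finset.range s,
    ∫ x : R3, (∫ y : R3,
      ((U (y - xiP s r i))^2 * Zfun U s r i x
        + 2 * U (y - xiP s r i) * Zfun U s r i y * U (x - xiP s r i)) * w x / ‖x - y‖) = 0)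
lemma aux_exp_quartic {δ : ℝ} (hδ : 0 < δ) :
    ∃ M > 0, ∀ t : ℝ, 0 ≤ t → Real.exp (-(δ * t)) ≤ M * (1 + t) ^ (-(4:ℝ)) := by
  set c : ℝ := min 1 (δ/4) with hc
  have hc0 : 0 < c := by positivity
  refine ⟨(c⁻¹)^4, by positivity, fun t ht => ?_⟩
  have h1t : (0:ℝ) < 1 + t := by linarith
  have hkey : c * (1 + t) ≤ Real.exp (δ * t / 4) := by
    have h1 : c * (1 + t) ≤ 1 + δ * t / 4 := by
      have e1 : c ≤ 1 := min_le_left _ _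
      have e2 : c ≤ δ/4 := min_le_right _ _
      nlinarith
    have h2 := Real.add_one_le_exp (δ * t / 4)
    linarith
  have hkey4 : (c * (1 + t))^4 ≤ Real.exp (δ * t) := by
    calc (c * (1 + t))^4 ≤ Real.exp (δ * t / 4) ^ 4 :=
          pow_le_pow_left₀ (by positivity) hkey 4
      _ = Real.exp (δ * t) := by rw [← Real.exp_nat_mul]; ring_nf
  have hr : (1 + t) ^ (-(4:ℝ)) = ((1 + t)^(4:ℕ))⁻¹ := by
    rw [Real.rpow_neg h1t.le]; congr 1; exact_mod_cast Real.rpow_natCast (1+t) 4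
  rw [hr, Real.exp_neg]
  rw [show (c⁻¹)^4 * ((1 + t)^(4:ℕ))⁻¹ = ((c * (1+t))^4)⁻¹ by
    rw [mul_pow]; rw [mul_inv]; rw [inv_pow]]
  exact inv_anti₀ (by positivity) hkey4

lemma integrable_exp_norm {δ : ℝ} (hδ : 0 < δ) :
    Integrable (fun y : R3 => Real.exp (-(δ * ‖y‖))) := by
  obtain ⟨M, hM, hMb⟩ := aux_exp_quartic hδ
  have hfin : ((Module.finrank ℝ R3 : ℝ)) < 4 := by
    simp [finrank_euclideanSpace_fin]; norm_num
  refine ((integrable_one_add_norm (μ := volume) hfin).const_mul M).mono' ?_ ?_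
  · exact (Continuous.aestronglyMeasurable (by fun_prop))
  · filter_upwards with y
    rw [Real.norm_of_nonneg (Real.exp_nonneg _)]
    exact hMb ‖y‖ (norm_nonneg _)


lemma aux_exp_cube {δ t : ℝ} (hδ : 0 < δ) (ht : 0 < t) :
    Real.exp (-(δ * t / 2)) ≤ 216 / δ^3 / t^3 := by
  have h0 : 0 < δ * t / 6 := by positivity
  have h1 : δ * t / 6 ≤ Real.exp (δ * t / 6) := by
    have := Real.add_one_le_exp (δ * t / 6); linarith
  have h2 : (δ * t / 6)^3 ≤ Real.exp (δ * t / 6) ^ 3 :=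
    pow_le_pow_left₀ h0.le h1 3
  have h3 : Real.exp (δ * t / 6) ^ 3 = Real.exp (δ * t / 2) := by
    rw [← Real.exp_nat_mul]; norm_num; ring_nf
  rw [Real.exp_neg]
  rw [h3] at h2
  have h4 : (0:ℝ) < (δ * t / 6)^3 := by positivity
  calc (Real.exp (δ * t / 2))⁻¹ ≤ ((δ * t / 6)^3)⁻¹ := by
        apply inv_anti₀ h4 h2
    _ = 216 / δ^3 / t^3 := by field_simp; ring

lemma ptwise_bound
    (V : ℝ → ℝ) (a θ m C_V R₀ : ℝ) (ha : 0 < a) (hθ : 0 < θ) (hm : m ∈ Set.Ioo (0:ℝ) 1)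
    (hCV : 0 < C_V) (hR₀ : 0 < R₀)
    (hV : ∀ ρ : ℝ, R₀ ≤ ρ → |V ρ - 1 - a * ρ ^ (-m)| ≤ C_V * ρ ^ (-(m + θ)))
    (Cb : ℝ) (hCb : ∀ ρ ∈ Set.Ioi (0:ℝ), |V ρ| ≤ Cb)
    (U : R3 → ℝ) (C₀ δ : ℝ) (hC₀ : 0 < C₀) (hδ : 0 < δ)
    (hUb : ∀ x : R3, 0 ≤ U x ∧ U x ≤ C₀ * Real.exp (-δ * ‖x‖))
    (ξ x : R3) (hξ : max 1 (2 * R₀) ≤ ‖ξ‖) (hx : x ≠ 0) :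
    (V ‖x‖ - 1)^2 * (U (x - ξ))^2 ≤
      (C₀^2 * ((a * (2:ℝ)^m + C_V * (2:ℝ)^(m+θ))^2 + (Cb+1)^2 * (216/δ^3)))
        * ‖ξ‖ ^ (-(2*m)) * Real.exp (-(δ * ‖x - ξ‖)) := by
  have hξ1 : 1 ≤ ‖ξ‖ := le_trans (le_max_left _ _) hξ
  have hξR : 2*R₀ ≤ ‖ξ‖ := le_trans (le_max_right _ _) hξ
  have hξ0 : (0:ℝ) < ‖ξ‖ := lt_of_lt_of_le one_pos hξ1
  set A : ℝ := a * (2:ℝ)^m + C_V * (2:ℝ)^(m+θ) with hA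
  set B : ℝ := (Cb+1)^2 * (216/δ^3) with hB
  set E : ℝ := Real.exp (-(δ * ‖x - ξ‖)) with hE
  set t : ℝ := ‖ξ‖ ^ (-(2*m)) with htdef
  have hApos : 0 < A := by positivity
  have hBpos : 0 < B := by
    have hCb0 : 0 ≤ Cb := le_trans (abs_nonneg _) (hCb 1 (by norm_num))
    positivity
  have hE0 : 0 < E := Real.exp_pos _
  have hE1 : E ≤ 1 := Real.exp_le_one_iff.mpr (neg_nonpos.mpr (by positivity))
  have ht0 : 0 ≤ t := Real.rpow_nonneg (norm_nonneg ξ) _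
  have hUx := hUb (x - ξ)
  have hU2 : (U (x - ξ))^2 ≤ C₀^2 * (E * E) := by
    have h1 : U (x - ξ) ≤ C₀ * E := by
      rw [hE, neg_mul] at *
      exact hUx.2
    have h2 : (U (x - ξ))^2 ≤ (C₀ * E)^2 := pow_le_pow_left₀ hUx.1 h1 2
    calc (U (x - ξ))^2 ≤ (C₀ * E)^2 := h2
      _ = C₀^2 * (E * E) := by ring
  have hsq : t = ‖ξ‖ ^ (-m) * ‖ξ‖ ^ (-m) := by
    rw [htdef, ← Real.rpow_add hξ0]; ring_nf
  rcases le_or_gt (‖ξ‖/2) ‖x‖ with hcase | hcase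
  · -- outer region
    have hρ0 : (0:ℝ) < ‖x‖ := lt_of_lt_of_le (by linarith) hcase
    have hVb := hV ‖x‖ (by linarith)
    have b1 : ‖x‖ ^ (-m) ≤ (2:ℝ)^m * ‖ξ‖ ^ (-m) := by
      have h1 : ‖x‖ ^ (-m) ≤ (‖ξ‖/2) ^ (-m) :=
        Real.rpow_le_rpow_of_nonpos (by positivity) hcase (by linarith [hm.1])
      have h2 : ((‖ξ‖/2 : ℝ)) ^ (-m) = (2:ℝ)^m * ‖ξ‖ ^ (-m) := by
        rw [div_eq_mul_inv, Real.mul_rpow (norm_nonneg ξ) (by norm_num),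
          Real.inv_rpow (by norm_num : (0:ℝ) ≤ 2), ← Real.rpow_neg (by norm_num : (0:ℝ) ≤ 2),
          neg_neg, mul_comm]
      linarith [h2 ▸ h1]
    have b2 : ‖x‖ ^ (-(m+θ)) ≤ (2:ℝ)^(m+θ) * ‖ξ‖ ^ (-m) := by
      have hsplit : ‖x‖ ^ (-(m+θ)) = ‖x‖ ^ (-m) * ‖x‖ ^ (-θ) := by
        rw [← Real.rpow_add hρ0]; ring_nf
      have hθb : ‖x‖ ^ (-θ) ≤ (2:ℝ)^θ := by
        have h1 : ‖x‖ ^ (-θ) ≤ ((2:ℝ)⁻¹) ^ (-θ) :=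
          Real.rpow_le_rpow_of_nonpos (by norm_num) (by linarith) (by linarith)
        have h2 : ((2:ℝ)⁻¹) ^ (-θ) = (2:ℝ)^θ := by
          rw [Real.inv_rpow (by norm_num : (0:ℝ) ≤ 2), ← Real.rpow_neg (by norm_num : (0:ℝ) ≤ 2),
            neg_neg]
        linarith [h2 ▸ h1]
      calc ‖x‖ ^ (-(m+θ)) = ‖x‖ ^ (-m) * ‖x‖ ^ (-θ) := hsplit
        _ ≤ ((2:ℝ)^m * ‖ξ‖ ^ (-m)) * (2:ℝ)^θ := by
            apply mul_le_mul b1 hθb (Real.rpow_nonneg (norm_nonneg x) _) (by positivity)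
        _ = (2:ℝ)^(m+θ) * ‖ξ‖ ^ (-m) := by rw [Real.rpow_add (by norm_num : (0:ℝ) < 2)]; ring
    have habs : |V ‖x‖ - 1| ≤ A * ‖ξ‖ ^ (-m) := by
      have h0 : (0:ℝ) ≤ a * ‖x‖ ^ (-m) := by positivity
      have htri : |V ‖x‖ - 1| ≤ C_V * ‖x‖ ^ (-(m+θ)) + a * ‖x‖ ^ (-m) := by
        calc |V ‖x‖ - 1| = |(V ‖x‖ - 1 - a * ‖x‖ ^ (-m)) + a * ‖x‖ ^ (-m)| := by ring_nf
          _ ≤ |V ‖x‖ - 1 - a * ‖x‖ ^ (-m)| + |a * ‖x‖ ^ (-m)| := abs_add_le _ _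
          _ ≤ C_V * ‖x‖ ^ (-(m+θ)) + a * ‖x‖ ^ (-m) := by
              rw [abs_of_nonneg h0]; exact add_le_add_left hVb _
      have c1 : a * ‖x‖ ^ (-m) ≤ a * ((2:ℝ)^m * ‖ξ‖ ^ (-m)) :=
        mul_le_mul_of_nonneg_left b1 ha.le
      have c2 : C_V * ‖x‖ ^ (-(m+θ)) ≤ C_V * ((2:ℝ)^(m+θ) * ‖ξ‖ ^ (-m)) :=
        mul_le_mul_of_nonneg_left b2 hCV.le
      calc |V ‖x‖ - 1| ≤ C_V * ‖x‖ ^ (-(m+θ)) + a * ‖x‖ ^ (-m) := htri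
        _ ≤ C_V * ((2:ℝ)^(m+θ) * ‖ξ‖ ^ (-m)) + a * ((2:ℝ)^m * ‖ξ‖ ^ (-m)) := add_le_add c2 c1
        _ = A * ‖ξ‖ ^ (-m) := by rw [hA]; ring
    have hVsq : (V ‖x‖ - 1)^2 ≤ A^2 * t := by
      have h2 : (V ‖x‖ - 1)^2 ≤ (A * ‖ξ‖ ^ (-m))^2 := by
        have hna := neg_abs_le (V ‖x‖ - 1)
        have hpa := le_abs_self (V ‖x‖ - 1)
        exact sq_le_sq' (by linarith) (by linarith)
      calc (V ‖x‖ - 1)^2 ≤ (A * ‖ξ‖ ^ (-m))^2 := h2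
        _ = A^2 * t := by rw [hsq]; ring
    have hE2 : E * E ≤ E := by nlinarith
    calc (V ‖x‖ - 1)^2 * (U (x - ξ))^2
        ≤ (A^2 * t) * (C₀^2 * (E * E)) := by
          apply mul_le_mul hVsq hU2 (sq_nonneg _) (by positivity)
      _ ≤ (A^2 * t) * (C₀^2 * E) := by
          apply mul_le_mul_of_nonneg_left _ (by positivity)
          exact mul_le_mul_of_nonneg_left hE2 (by positivity)
      _ = (C₀^2 * A^2) * (t * E) := by ring
      _ ≤ (C₀^2 * (A^2 + B)) * (t * E) :=
          mul_le_mul_of_nonneg_right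
            (mul_le_mul_of_nonneg_left (le_add_of_nonneg_right hBpos.le) (sq_nonneg C₀))
            (mul_nonneg ht0 hE0.le)
      _ = (C₀^2 * (A^2 + B)) * t * E := by ring
  · -- inner region
    have hxr : ‖ξ‖/2 ≤ ‖x - ξ‖ := by
      have h1 : ‖ξ‖ - ‖x‖ ≤ ‖ξ - x‖ := by
        have := norm_sub_norm_le ξ x; linarith
      rw [norm_sub_rev ξ x] at h1; linarith
    have hρ0 : (0:ℝ) < ‖x‖ := norm_pos_iff.mpr hx
    have hVb : |V ‖x‖ - 1| ≤ Cb + 1 := by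
      calc |V ‖x‖ - 1| = |V ‖x‖ + (-1)| := by ring_nf
        _ ≤ |V ‖x‖| + |(-1:ℝ)| := abs_add_le _ _
        _ ≤ Cb + 1 := by
            have := hCb ‖x‖ (Set.mem_Ioi.mpr hρ0); simp only [abs_neg, abs_one]; linarith
    have hVsq : (V ‖x‖ - 1)^2 ≤ (Cb+1)^2 := by
      have hna := neg_abs_le (V ‖x‖ - 1)
      have hpa := le_abs_self (V ‖x‖ - 1)
      exact sq_le_sq' (by linarith) (by linarith)
    have hEξ : E ≤ 216/δ^3 * t := by
      have h1 : E ≤ Real.exp (-(δ * ‖ξ‖ / 2)) := by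
        apply Real.exp_le_exp.mpr
        have := mul_le_mul_of_nonneg_left hxr hδ.le
        linarith
      have h2 : Real.exp (-(δ * ‖ξ‖ / 2)) ≤ 216 / δ^3 / ‖ξ‖^3 := aux_exp_cube hδ hξ0
      have h3 : 216 / δ^3 / ‖ξ‖^3 ≤ 216/δ^3 * t := by
        rw [div_eq_mul_inv (216/δ^3) (‖ξ‖^3)]
        apply mul_le_mul_of_nonneg_left _ (by positivity)
        have hAA : ‖ξ‖ ^ (2*m) ≤ ‖ξ‖ ^ ((3:ℕ):ℝ) :=
          Real.rpow_le_rpow_of_exponent_le hξ1 (by push_cast; linarith [hm.2])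
        rw [Real.rpow_natCast] at hAA
        rw [htdef, Real.rpow_neg (norm_nonneg ξ)]
        exact inv_anti₀ (by positivity) hAA
      linarith
    calc (V ‖x‖ - 1)^2 * (U (x - ξ))^2
        ≤ (Cb+1)^2 * (C₀^2 * (E * E)) := by
          apply mul_le_mul hVsq hU2 (sq_nonneg _) (by positivity)
      _ ≤ (Cb+1)^2 * (C₀^2 * ((216/δ^3 * t) * E)) := by
          apply mul_le_mul_of_nonneg_left _ (by positivity)
          apply mul_le_mul_of_nonneg_left _ (by positivity)
          exact mul_le_mul_of_nonneg_right hEξ hE0.le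
      _ = (C₀^2 * B) * (t * E) := by rw [hB]; ring
      _ ≤ (C₀^2 * (A^2 + B)) * (t * E) :=
          mul_le_mul_of_nonneg_right
            (mul_le_mul_of_nonneg_left (le_add_of_nonneg_left (sq_nonneg A)) (sq_nonneg C₀))
            (mul_nonneg ht0 hE0.le)
      _ = (C₀^2 * (A^2 + B)) * t * E := by ring

/-- L² bound for (V(|x|)−1)U(x−ξ) and the resulting bound on the
pairing with an L² function w. -/
theorem potential_perturbation_L2_bound
    (V : ℝ → ℝ) (hmeas : Measurable V) (hbdd : ∃ Cb : ℝ, ∀ ρ ∈ Set.Ioi (0:ℝ), |V ρ| ≤ Cb)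
    (a θ m C_V R₀ : ℝ) (ha : 0 < a) (hθ : 0 < θ) (hm : m ∈ Set.Ioo (0:ℝ) 1)
    (hCV : 0 < C_V) (hR₀ : 0 < R₀)
    (hV : ∀ ρ : ℝ, R₀ ≤ ρ → |V ρ - 1 - a * ρ ^ (-m)| ≤ C_V * ρ ^ (-(m + θ)))
    (U : R3 → ℝ) (hU : Measurable U)
    (C₀ δ : ℝ) (hC₀ : 0 < C₀) (hδ : 0 < δ)
    (hUb : ∀ x : R3, 0 ≤ U x ∧ U x ≤ C₀ * Real.exp (-δ * ‖x‖)) :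
    ∃ C > (0:ℝ), ∀ ξ : R3, max 1 (2 * R₀) ≤ ‖ξ‖ →
      (∫ x : R3, (V ‖x‖ - 1)^2 * (U (x - ξ))^2) ≤ C / ‖ξ‖ ^ (2 * m) ∧
      ∀ w : R3 → ℝ, MeasureTheory.MemLp w 2 MeasureTheory.volume →
        |∫ x : R3, (V ‖x‖ - 1) * U (x - ξ) * w x|
          ≤ Real.sqrt C * ‖ξ‖ ^ (-m) * Real.sqrt (∫ x : R3, (w x)^2) := by
  obtain ⟨Cb, hCb⟩ := hbdd
  set K : ℝ := C₀^2 * ((a * (2:ℝ)^m + C_V * (2:ℝ)^(m+θ))^2 + (Cb+1)^2 * (216/δ^3)) with hKdef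
  have hCb0 : 0 ≤ Cb := le_trans (abs_nonneg _) (hCb 1 (by norm_num))
  have hK : 0 < K := by
    have h1 : (0:ℝ) < a * (2:ℝ)^m + C_V * (2:ℝ)^(m+θ) := by positivity
    positivity
  set I : ℝ := ∫ y : R3, Real.exp (-(δ * ‖y‖)) with hIdef
  have hIint : Integrable (fun y : R3 => Real.exp (-(δ * ‖y‖))) := integrable_exp_norm hδ
  have hI0 : 0 ≤ I := integral_nonneg fun y => (Real.exp_nonneg _)
  refine ⟨K * I + 1, by positivity, fun ξ hξ => ?_⟩
  have hξ1 : 1 ≤ ‖ξ‖ := le_trans (le_max_left _ _) hξ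
  have hξ0 : (0:ℝ) < ‖ξ‖ := lt_of_lt_of_le one_pos hξ1
  set t : ℝ := ‖ξ‖ ^ (-(2*m)) with htdef
  have ht0 : 0 ≤ t := Real.rpow_nonneg (norm_nonneg ξ) _
  have htinv : t = (‖ξ‖ ^ (2*m))⁻¹ := Real.rpow_neg (norm_nonneg ξ) _
  have hmeasF : Measurable fun x : R3 => (V ‖x‖ - 1)^2 * (U (x - ξ))^2 := by
    have h1 : Measurable fun x : R3 => x - ξ := measurable_id.sub measurable_const
    exact (((hmeas.comp measurable_norm).sub measurable_const).pow_const 2).mul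
      ((hU.comp h1).pow_const 2)
  have hgint : Integrable (fun x : R3 => Real.exp (-(δ * ‖x - ξ‖))) :=
    hIint.comp_sub_right ξ
  have hae0 : ∀ᵐ x : R3, x ≠ (0:R3) := by
    have h0 : volume ({(0:R3)} : Set R3) = 0 := measure_singleton 0
    rw [ae_iff]
    simpa only [not_not, Set.setOf_eq_eq_singleton] using h0
  have hbound : ∀ᵐ x : R3,
      (V ‖x‖ - 1)^2 * (U (x - ξ))^2 ≤ K * t * Real.exp (-(δ * ‖x - ξ‖)) := by
    filter_upwards [hae0] with x hx
    exact ptwise_bound V a θ m C_V R₀ ha hθ hm hCV hR₀ hV Cb hCb U C₀ δ hC₀ hδ hUb ξ x hξ hx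
  have hnonneg : ∀ᵐ x : R3, 0 ≤ (V ‖x‖ - 1)^2 * (U (x - ξ))^2 :=
    Eventually.of_forall fun x => mul_nonneg (sq_nonneg _) (sq_nonneg _)
  have hFint : Integrable (fun x : R3 => (V ‖x‖ - 1)^2 * (U (x - ξ))^2) := by
    refine ((hgint.const_mul (K * t)).mono' hmeasF.aestronglyMeasurable ?_)
    filter_upwards [hbound] with x hx
    rw [Real.norm_of_nonneg (mul_nonneg (sq_nonneg _) (sq_nonneg _))]
    exact hx
  have hmain : (∫ x : R3, (V ‖x‖ - 1)^2 * (U (x - ξ))^2) ≤ (K * I + 1) / ‖ξ‖ ^ (2*m) := by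
    have h1 : (∫ x : R3, (V ‖x‖ - 1)^2 * (U (x - ξ))^2)
        ≤ ∫ x : R3, K * t * Real.exp (-(δ * ‖x - ξ‖)) :=
      integral_mono_of_nonneg hnonneg (hgint.const_mul _) hbound
    have h2 : (∫ x : R3, K * t * Real.exp (-(δ * ‖x - ξ‖))) = K * t * I := by
      rw [integral_const_mul, hIdef]
      congr 1
      exact integral_sub_right_eq_self (fun y => Real.exp (-(δ * ‖y‖))) ξ
    have h3 : K * t * I ≤ (K * I + 1) * t := by nlinarith
    rw [div_eq_mul_inv, ← htinv]
    linarith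
  refine ⟨hmain, fun w hw => ?_⟩
  set F : R3 → ℝ := fun x => (V ‖x‖ - 1) * U (x - ξ) with hFdef
  have hFmeas : Measurable F :=
    ((hmeas.comp measurable_norm).sub measurable_const).mul
      (hU.comp (measurable_id.sub measurable_const))
  have hF2 : Integrable (fun x : R3 => F x ^ 2) := by
    refine hFint.congr ?_
    filter_upwards with x
    simp [hFdef, mul_pow]
  have hFmem : MemLp F 2 volume :=
    (memLp_two_iff_integrable_sq hFmeas.aestronglyMeasurable).mpr hF2
  have hpq : Real.HolderConjugate 2 2 := Real.holderConjugate_iff.mpr ⟨by norm_num, by norm_num⟩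
  have h2e : ENNReal.ofReal (2:ℝ) = 2 := by norm_num
  have hholder := integral_mul_norm_le_Lp_mul_Lq (μ := volume) hpq
    (by rw [h2e]; exact hFmem) (by rw [h2e]; exact hw)
  have hnorm2F : ∀ y : ℝ, ‖y‖ ^ (2:ℝ) = y^2 := fun y => by
    rw [show (2:ℝ) = ((2:ℕ):ℝ) by norm_num, Real.rpow_natCast, Real.norm_eq_abs, sq_abs]
  have heqF : (∫ a : R3, ‖F a‖ ^ (2:ℝ)) = ∫ x : R3, (V ‖x‖ - 1)^2 * (U (x - ξ))^2 := by
    refine integral_congr_ae (Eventually.of_forall fun x => ?_)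
    simp only [hnorm2F, hFdef]
    ring
  have heqw : (∫ a : R3, ‖w a‖ ^ (2:ℝ)) = ∫ x : R3, (w x)^2 := by
    refine integral_congr_ae (Eventually.of_forall fun x => ?_)
    simp only [hnorm2F]
  have habs : |∫ x : R3, (V ‖x‖ - 1) * U (x - ξ) * w x| ≤ ∫ a : R3, ‖F a‖ * ‖w a‖ := by
    rw [← Real.norm_eq_abs]
    refine le_trans (norm_integral_le_integral_norm _) (le_of_eq ?_)
    refine integral_congr_ae (Eventually.of_forall fun x => ?_)
    simp [hFdef, norm_mul]
  have hs1 : (∫ a : R3, ‖F a‖ ^ (2:ℝ)) ^ ((1:ℝ)/2) ≤ Real.sqrt (K*I+1) * ‖ξ‖ ^ (-m) := by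
    rw [heqF, ← Real.sqrt_eq_rpow]
    refine le_trans (Real.sqrt_le_sqrt hmain) ?_
    have hsplit : Real.sqrt ((K*I+1) / ‖ξ‖ ^ (2*m))
        = Real.sqrt (K*I+1) / Real.sqrt (‖ξ‖ ^ (2*m)) := Real.sqrt_div (by positivity) _
    have hsq2 : Real.sqrt (‖ξ‖ ^ (2*m)) = ‖ξ‖ ^ m := by
      rw [Real.sqrt_eq_rpow, ← Real.rpow_mul (norm_nonneg ξ)]
      congr 1
      ring
    rw [hsplit, hsq2, Real.rpow_neg (norm_nonneg ξ), div_eq_mul_inv]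
  have hs2 : (∫ a : R3, ‖w a‖ ^ (2:ℝ)) ^ ((1:ℝ)/2) = Real.sqrt (∫ x : R3, (w x)^2) := by
    rw [heqw, Real.sqrt_eq_rpow]
  calc |∫ x : R3, (V ‖x‖ - 1) * U (x - ξ) * w x|
      ≤ ∫ a : R3, ‖F a‖ * ‖w a‖ := habs
    _ ≤ (∫ a : R3, ‖F a‖ ^ (2:ℝ)) ^ ((1:ℝ)/2) * (∫ a : R3, ‖w a‖ ^ (2:ℝ)) ^ ((1:ℝ)/2) :=
        hholder
    _ ≤ (Real.sqrt (K*I+1) * ‖ξ‖ ^ (-m)) * Real.sqrt (∫ x : R3, (w x)^2) := by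
        rw [hs2]
        exact mul_le_mul_of_nonneg_right hs1 (Real.sqrt_nonneg _)
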